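/- arXiv:1110.1848 — 4 statements merged into one kernel-verified Lean document; each statement's English description precedes it below -/
import Mathlib

section
/- Let L be a first-order language consisting of function symbols (and constants), let Λ be a finite set of ground L-terms with |Λ| ≥ 2, and let p be an evaluation on Λ. If t, s ∈ Λ satisfy t ≈_p s, and u(x), v(x) are L-terms in at most one variable x such that the ground terms u(t), u(s), v(t), v(s) all belong to Λ, then p ⊨ u(t) = v(t) iff p ⊨ u(s) = v(s), and p ⊨ u(t) ≤ v(t) iff p ⊨ u(s) ≤ v(s). -/
open FirstOrder Language

/-- Let `L` be a first-order language of function symbols (and constants),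
`Λ` a finite set of ground `L`-terms with `|Λ| = n ≥ 2`, and `p` an evaluation on `Λ`:
a pre-evaluation (bijective enumeration `e : Λ ≃ Fin n` together with separators
`ε k ∈ {≈, ≺}`, where `ε k = true` means `≈` and `ε k = false` means `≺`; `≈_p` and
`≺_p` are as usual) whose relation `≈_p` is a congruence.  If `t, s ∈ Λ` satisfy
`t ≈_p s`, and `u(x)`, `v(x)` are `L`-terms in at most one variable such that
`u(t), u(s), v(t), v(s) ∈ Λ`, then `p ⊨ u(t) = v(t)` iff `p ⊨ u(s) = v(s)`, and
`p ⊨ u(t) ≤ v(t)` iff `p ⊨ u(s) ≤ v(s)`  (where `p ⊨ a = b` iff `a ≈_p b` and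
`p ⊨ a ≤ b` iff `a ≈_p b` or `a ≺_p b`). -/
theorem evaluation_atomic_substitution
    (L : Language) (Λ : Set (L.Term Empty)) (n : ℕ) (hn : 2 ≤ n)
    (e : Λ ≃ Fin n) (ε : ℕ → Bool)
    (approx prec : L.Term Empty → L.Term Empty → Prop)
    (happrox : ∀ a b, approx a b ↔
      ∃ (ha : a ∈ Λ) (hb : b ∈ Λ),
        ∀ k : ℕ, min (e ⟨a, ha⟩ : ℕ) (e ⟨b, hb⟩ : ℕ) < k →
          k ≤ max (e ⟨a, ha⟩ : ℕ) (e ⟨b, hb⟩ : ℕ) → ε k = true)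
    (hprec : ∀ a b, prec a b ↔
      ∃ (ha : a ∈ Λ) (hb : b ∈ Λ),
        (e ⟨a, ha⟩ : ℕ) < (e ⟨b, hb⟩ : ℕ) ∧
          ∃ k : ℕ, (e ⟨a, ha⟩ : ℕ) < k ∧ k ≤ (e ⟨b, hb⟩ : ℕ) ∧ ε k = false)
    -- `≈_p` is a congruence (`p` is an evaluation):
    (hcong : ∀ a b : L.Term Empty, a ∈ Λ → b ∈ Λ → approx a b →
      ∀ w : L.Term (Fin 1), w.subst (fun _ => a) ∈ Λ → w.subst (fun _ => b) ∈ Λ →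
        approx (w.subst fun _ => a) (w.subst fun _ => b))
    (t s : L.Term Empty) (ht : t ∈ Λ) (hs : s ∈ Λ) (hts : approx t s)
    (u v : L.Term (Fin 1))
    (hut : u.subst (fun _ => t) ∈ Λ) (hus : u.subst (fun _ => s) ∈ Λ)
    (hvt : v.subst (fun _ => t) ∈ Λ) (hvs : v.subst (fun _ => s) ∈ Λ) :
    (approx (u.subst fun _ => t) (v.subst fun _ => t) ↔
      approx (u.subst fun _ => s) (v.subst fun _ => s)) ∧
    ((approx (u.subst fun _ => t) (v.subst fun _ => t) ∨
        prec (u.subst fun _ => t) (v.subst fun _ => t)) ↔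
      (approx (u.subst fun _ => s) (v.subst fun _ => s) ∨
        prec (u.subst fun _ => s) (v.subst fun _ => s))) := by

  classical
  let A : ℕ → ℕ → Prop := fun i j => ∀ k, min i j < k → k ≤ max i j → ε k = true
  let P : ℕ → ℕ → Prop := fun i j => i < j ∧ ∃ k, i < k ∧ k ≤ j ∧ ε k = false
  have hA : ∀ a b (ha : a ∈ Λ) (hb : b ∈ Λ),
      approx a b ↔ A (e ⟨a, ha⟩ : ℕ) (e ⟨b, hb⟩ : ℕ) := by
    intro a b ha hb
    rw [happrox]
    constructor
    · rintro ⟨ha', hb', h⟩; exact h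
    · intro h; exact ⟨ha, hb, h⟩
  have hP : ∀ a b (ha : a ∈ Λ) (hb : b ∈ Λ),
      prec a b ↔ P (e ⟨a, ha⟩ : ℕ) (e ⟨b, hb⟩ : ℕ) := by
    intro a b ha hb
    rw [hprec]
    constructor
    · rintro ⟨ha', hb', h⟩; exact h
    · intro h; exact ⟨ha, hb, h⟩
  have Asymm : ∀ i j, A i j → A j i := by
    intro i j h k h1 h2
    exact h k (by omega) (by omega)
  have Atrans : ∀ i j l, A i j → A j l → A i l := by
    intro i j l h1 h2 k hk1 hk2
    rcases (by omega : (min i j < k ∧ k ≤ max i j) ∨ (min j l < k ∧ k ≤ max j l)) with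
      ⟨a, b⟩ | ⟨a, b⟩
    · exact h1 k a b
    · exact h2 k a b
  have Ptrans : ∀ i i' j j', A i i' → A j j' → P i j → P i' j' := by
    rintro i i' j j' hii hjj ⟨hij, k, hk1, hk2, hkf⟩
    have h1 : i' < k := by
      by_contra h
      push_neg at h
      have := hii k (by omega) (by omega)
      simp [hkf] at this
    have h2 : k ≤ j' := by
      by_contra h
      push_neg at h
      have := hjj k (by omega) (by omega)
      simp [hkf] at this
    exact ⟨by omega, k, h1, h2, hkf⟩
  have huu := hcong t s ht hs hts u hut hus
  have hvv := hcong t s ht hs hts v hvt hvs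
  rw [hA _ _ hut hus] at huu
  rw [hA _ _ hvt hvs] at hvv
  rw [hA _ _ hut hvt, hA _ _ hus hvs, hP _ _ hut hvt, hP _ _ hus hvs]
  constructor
  · constructor
    · intro h; exact Atrans _ _ _ (Atrans _ _ _ (Asymm _ _ huu) h) hvv
    · intro h; exact Atrans _ _ _ (Atrans _ _ _ huu h) (Asymm _ _ hvv)
  · constructor
    · rintro (h | h)
      · exact Or.inl (Atrans _ _ _ (Atrans _ _ _ (Asymm _ _ huu) h) hvv)
      · exact Or.inr (Ptrans _ _ _ _ huu hvv h)
    · rintro (h | h)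
      · exact Or.inl (Atrans _ _ _ (Atrans _ _ _ huu h) (Asymm _ _ hvv))
      · exact Or.inr (Ptrans _ _ _ _ (Asymm _ _ huu) (Asymm _ _ hvv) h)
end

section
/- Let L be a first-order language consisting of function symbols (and constants), let Λ be a finite set of ground L-terms with |Λ| ≥ 2, and let p be an evaluation on Λ. Then Leibniz's Law holds in p: for all t, s ∈ Λ and every quantifier-free formula φ(x) in at most one free variable x, whose atomic subformulas are of the form u = v or u ≤ v for L-terms u, v, such that every ground term occurring in φ(t) and every ground term occurring in φ(s) belongs to Λ, if p ⊨ t = s and p ⊨ φ(t) then p ⊨ φ(s). -/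
open FirstOrder Language

/-- Quantifier-free formulas over the language `L` with variables from `α`,
whose atoms are `u = v` and `u ≤ v` for `L`-terms `u`, `v`, built with
`¬`, `∧`, `∨`, `→`. -/
inductive QF (L : Language) (α : Type) : Type _
  | eq : L.Term α → L.Term α → QF L α
  | le : L.Term α → L.Term α → QF L α
  | not : QF L α → QF L α
  | and : QF L α → QF L α → QF L α
  | or : QF L α → QF L α → QF L α
  | imp : QF L α → QF L α → QF L α

/-- Substituting ground terms for the variables of a quantifier-free formula. -/
def QF.substG {L : Language} {α : Type} (σ : α → L.Term Empty) :
    QF L α → QF L Empty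
  | .eq u v => .eq (u.subst σ) (v.subst σ)
  | .le u v => .le (u.subst σ) (v.subst σ)
  | .not φ => .not (φ.substG σ)
  | .and φ ψ => .and (φ.substG σ) (ψ.substG σ)
  | .or φ ψ => .or (φ.substG σ) (ψ.substG σ)
  | .imp φ ψ => .imp (φ.substG σ) (ψ.substG σ)

/-- The ground terms occurring in a ground quantifier-free formula
(the two sides of each atomic subformula). -/
def QF.terms {L : Language} : QF L Empty → Set (L.Term Empty)
  | .eq u v => {u, v}
  | .le u v => {u, v}
  | .not φ => φ.terms
  | .and φ ψ => φ.terms ∪ ψ.terms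
  | .or φ ψ => φ.terms ∪ ψ.terms
  | .imp φ ψ => φ.terms ∪ ψ.terms

/-- Satisfaction of a ground quantifier-free formula in an evaluation `p`, given its
relations `≈_p` and `≺_p`:  `p ⊨ u = v` iff `u ≈_p v`;  `p ⊨ u ≤ v` iff `u ≈_p v` or
`u ≺_p v`; classical truth-functional clauses for `¬`, `∧`, `∨`, `→`. -/
def QF.sat {L : Language} (approx prec : L.Term Empty → L.Term Empty → Prop) :
    QF L Empty → Prop
  | .eq u v => approx u v
  | .le u v => approx u v ∨ prec u v
  | .not φ => ¬ φ.sat approx prec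
  | .and φ ψ => φ.sat approx prec ∧ ψ.sat approx prec
  | .or φ ψ => φ.sat approx prec ∨ ψ.sat approx prec
  | .imp φ ψ => φ.sat approx prec → ψ.sat approx prec

/-- Leibniz's Law: Let `L` be a first-order language of function symbols
(and constants), `Λ` a finite set of ground `L`-terms with `|Λ| = n ≥ 2`, and `p` an
evaluation on `Λ` (a pre-evaluation, given by an enumeration `e : Λ ≃ Fin n` and
separators `ε k ∈ {≈, ≺}` — `true` meaning `≈`, `false` meaning `≺` — whose relation
`≈_p` is a congruence).  For all `t, s ∈ Λ` and every quantifier-free formula `φ(x)`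
in at most one free variable whose atoms are `u = v` or `u ≤ v`, such that every
ground term occurring in `φ(t)` and in `φ(s)` belongs to `Λ`:
if `p ⊨ t = s` and `p ⊨ φ(t)` then `p ⊨ φ(s)`. -/
theorem evaluation_leibniz_law
    (L : Language) (Λ : Set (L.Term Empty)) (n : ℕ) (hn : 2 ≤ n)
    (e : Λ ≃ Fin n) (ε : ℕ → Bool)
    (approx prec : L.Term Empty → L.Term Empty → Prop)
    (happrox : ∀ a b, approx a b ↔
      ∃ (ha : a ∈ Λ) (hb : b ∈ Λ),
        ∀ k : ℕ, min (e ⟨a, ha⟩ : ℕ) (e ⟨b, hb⟩ : ℕ) < k →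
          k ≤ max (e ⟨a, ha⟩ : ℕ) (e ⟨b, hb⟩ : ℕ) → ε k = true)
    (hprec : ∀ a b, prec a b ↔
      ∃ (ha : a ∈ Λ) (hb : b ∈ Λ),
        (e ⟨a, ha⟩ : ℕ) < (e ⟨b, hb⟩ : ℕ) ∧
          ∃ k : ℕ, (e ⟨a, ha⟩ : ℕ) < k ∧ k ≤ (e ⟨b, hb⟩ : ℕ) ∧ ε k = false)
    -- `≈_p` is a congruence (`p` is an evaluation):
    (hcong : ∀ a b : L.Term Empty, a ∈ Λ → b ∈ Λ → approx a b →
      ∀ w : L.Term (Fin 1), w.subst (fun _ => a) ∈ Λ → w.subst (fun _ => b) ∈ Λ →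
        approx (w.subst fun _ => a) (w.subst fun _ => b))
    (t s : L.Term Empty) (ht : t ∈ Λ) (hs : s ∈ Λ)
    (φ : QF L (Fin 1))
    (hφt : ∀ w ∈ (φ.substG fun _ => t).terms, w ∈ Λ)
    (hφs : ∀ w ∈ (φ.substG fun _ => s).terms, w ∈ Λ)
    (hts : approx t s)
    (hsat : QF.sat approx prec (φ.substG fun _ => t)) :
    QF.sat approx prec (φ.substG fun _ => s) := by

  -- symmetry of approx
  have symm : ∀ a b, approx a b → approx b a := by
    intro a b h
    rw [happrox] at h ⊢
    obtain ⟨ha, hb, h⟩ := h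
    exact ⟨hb, ha, fun k h1 h2 => h k (by omega) (by omega)⟩
  -- transitivity of approx
  have trans : ∀ a b c, approx a b → approx b c → approx a c := by
    intro a b c h1 h2
    rw [happrox] at h1 h2 ⊢
    obtain ⟨ha, hb, h1⟩ := h1
    obtain ⟨hb', hc, h2⟩ := h2
    refine ⟨ha, hc, fun k hk1 hk2 => ?_⟩
    by_cases hcase : min (e ⟨a, ha⟩ : ℕ) (e ⟨b, hb⟩ : ℕ) < k ∧ k ≤ max (e ⟨a, ha⟩ : ℕ) (e ⟨b, hb⟩ : ℕ)
    · exact h1 k hcase.1 hcase.2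
    · exact h2 k (by omega) (by omega)
  -- prec is invariant under approx
  have precinv : ∀ a a' b b', approx a a' → approx b b' → prec a b → prec a' b' := by
    intro a a' b b' haa hbb hab
    rw [happrox] at haa hbb
    rw [hprec] at hab ⊢
    obtain ⟨ha, ha', haa⟩ := haa
    obtain ⟨hb, hb', hbb⟩ := hbb
    obtain ⟨ha2, hb2, hij, k, hk1, hk2, hkf⟩ := hab
    refine ⟨ha', hb', ?_⟩
    set i := (e ⟨a, ha⟩ : ℕ)
    set j := (e ⟨b, hb⟩ : ℕ)
    set i' := (e ⟨a', ha'⟩ : ℕ)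
    set j' := (e ⟨b', hb'⟩ : ℕ)
    have hik : i' < k := by
      by_contra hcon
      have := haa k (by omega) (by omega)
      simp [hkf] at this
    have hjk : k ≤ j' := by
      by_contra hcon
      have := hbb k (by omega) (by omega)
      simp [hkf] at this
    exact ⟨by omega, k, by omega, by omega, hkf⟩
  have main : ∀ ψ : QF L (Fin 1),
      (∀ w ∈ (ψ.substG fun _ => t).terms, w ∈ Λ) →
      (∀ w ∈ (ψ.substG fun _ => s).terms, w ∈ Λ) →
      (QF.sat approx prec (ψ.substG fun _ => t) ↔
        QF.sat approx prec (ψ.substG fun _ => s)) := by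
    intro ψ
    induction ψ with
    | eq u v =>
      intro hT hS
      have hut : u.subst (fun _ => t) ∈ Λ := hT _ (Or.inl rfl)
      have hvt : v.subst (fun _ => t) ∈ Λ := hT _ (Or.inr rfl)
      have hus : u.subst (fun _ => s) ∈ Λ := hS _ (Or.inl rfl)
      have hvs : v.subst (fun _ => s) ∈ Λ := hS _ (Or.inr rfl)
      have hu := hcong t s ht hs hts u hut hus
      have hv := hcong t s ht hs hts v hvt hvs
      constructor
      · intro h; exact trans _ _ _ (trans _ _ _ (symm _ _ hu) h) hv
      · intro h; exact trans _ _ _ (trans _ _ _ hu h) (symm _ _ hv)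
    | le u v =>
      intro hT hS
      have hut : u.subst (fun _ => t) ∈ Λ := hT _ (Or.inl rfl)
      have hvt : v.subst (fun _ => t) ∈ Λ := hT _ (Or.inr rfl)
      have hus : u.subst (fun _ => s) ∈ Λ := hS _ (Or.inl rfl)
      have hvs : v.subst (fun _ => s) ∈ Λ := hS _ (Or.inr rfl)
      have hu := hcong t s ht hs hts u hut hus
      have hv := hcong t s ht hs hts v hvt hvs
      constructor
      · rintro (h | h)
        · exact Or.inl (trans _ _ _ (trans _ _ _ (symm _ _ hu) h) hv)
        · exact Or.inr (precinv _ _ _ _ hu hv h)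
      · rintro (h | h)
        · exact Or.inl (trans _ _ _ (trans _ _ _ hu h) (symm _ _ hv))
        · exact Or.inr (precinv _ _ _ _ (symm _ _ hu) (symm _ _ hv) h)
    | not φ ih =>
      intro hT hS
      exact not_congr (ih hT hS)
    | and φ ψ ih1 ih2 =>
      intro hT hS
      exact and_congr (ih1 (fun w hw => hT w (Or.inl hw)) (fun w hw => hS w (Or.inl hw)))
        (ih2 (fun w hw => hT w (Or.inr hw)) (fun w hw => hS w (Or.inr hw)))
    | or φ ψ ih1 ih2 =>
      intro hT hS
      exact or_congr (ih1 (fun w hw => hT w (Or.inl hw)) (fun w hw => hS w (Or.inl hw)))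
        (ih2 (fun w hw => hT w (Or.inr hw)) (fun w hw => hS w (Or.inr hw)))
    | imp φ ψ ih1 ih2 =>
      intro hT hS
      exact imp_congr (ih1 (fun w hw => hT w (Or.inl hw)) (fun w hw => hS w (Or.inl hw)))
        (ih2 (fun w hw => hT w (Or.inr hw)) (fun w hw => hS w (Or.inr hw)))
  exact (main φ hφt hφs).mp hsat
end

section
/- Every T₁-structure K satisfies the following four sentences: (i) ∀x (S(x) ≠ 0); (ii) ∀x ∀y (S(x) = S(y) → x = y); (iii) ∀x ¬(S(x) ≤ x); (iv) ∀x (x ≠ 0 → ∃y (x = S(y))). -/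
/-- A `T₁`-structure: a set `K` interpreting the language `L_A = {0, S, +, ·, ≤}` and
satisfying the (universal closures of the) axioms of the finite fragment `T₁`. -/
structure T1Structure (K : Type) where
  zero : K
  succ : K → K
  add : K → K → K
  mul : K → K → K
  le : K → K → Prop
  add_zero : ∀ x, add x zero = x
  add_succ : ∀ x y, add x (succ y) = succ (add x y)
  mul_zero : ∀ x, mul x zero = zero
  mul_succ : ∀ x y, mul x (succ y) = add (mul x y) x
  le_zero_iff : ∀ x, le x zero ↔ x = zero
  le_succ_iff : ∀ x y, le x (succ y) ↔ x = succ y ∨ le x y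
  le_total : ∀ x y, le x y ∨ le y x
  le_trans : ∀ x y z, le x y → le y z → le x z
  le_add_left : ∀ x z, le x (add z x)
  le_add_right : ∀ x z, le x (add x z)
  le_of_add_le_add : ∀ x y z, le (add x z) (add y z) → le x y
  le_of_mul_le_mul : ∀ x y z, z ≠ zero → le (mul x z) (mul y z) → le x y
  ne_iff : ∀ x y, x ≠ y ↔ (le (succ x) y ∨ le (succ y) x)
  not_le_iff : ∀ x y, ¬ le x y ↔ le (succ y) x
  exists_add_of_le : ∀ x y, le x y → ∃ z, add z x = y
  exists_div_mod : ∀ x y, y ≠ zero → ∃ q r, x = add r (mul q y) ∧ le r y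

/-- Every `T₁`-structure `K` satisfies:
(i) `∀x (S(x) ≠ 0)`; (ii) `∀x ∀y (S(x) = S(y) → x = y)`;
(iii) `∀x ¬(S(x) ≤ x)`; (iv) `∀x (x ≠ 0 → ∃y (x = S(y)))`. -/
theorem T1Structure.succ_properties (K : Type) (T : T1Structure K) :
    (∀ x : K, T.succ x ≠ T.zero) ∧
    (∀ x y : K, T.succ x = T.succ y → x = y) ∧
    (∀ x : K, ¬ T.le (T.succ x) x) ∧
    (∀ x : K, x ≠ T.zero → ∃ y : K, x = T.succ y) := by
  have refl : ∀ x : K, T.le x x := fun x => (T.le_total x x).elim id id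
  have h3 : ∀ x : K, ¬ T.le (T.succ x) x := by
    intro x h
    exact ((T.not_le_iff (T.succ x) x).mpr (refl (T.succ x))) h
  have h1 : ∀ x : K, T.succ x ≠ T.zero := by
    intro x h
    have hsx0 : T.le (T.succ x) T.zero := (T.le_zero_iff (T.succ x)).mpr h
    rcases T.le_total T.zero x with h0 | h0
    · exact h3 x (T.le_trans _ _ _ hsx0 h0)
    · have hx0 : x = T.zero := (T.le_zero_iff x).mp h0
      exact h3 x (hx0 ▸ hsx0)
  refine ⟨h1, ?_, h3, ?_⟩
  · intro x y h
    by_contra hne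
    rcases (T.ne_iff x y).mp hne with hl | hl
    · exact h3 y (h ▸ hl)
    · exact h3 x (h ▸ hl)
  · intro x hx
    have : ¬ T.le x T.zero := fun h => hx ((T.le_zero_iff x).mp h)
    have h1 : T.le (T.succ T.zero) x := (T.not_le_iff x T.zero).mp this
    obtain ⟨z, hz⟩ := T.exists_add_of_le _ _ h1
    refine ⟨z, ?_⟩
    rw [← hz, T.add_succ, T.add_zero]
end

section
/- Let K be a T₁-structure and a ∈ K. For every L_A-term t(x₁,…,xₙ), all elements i₁,…,iₙ ∈ K with i₁ ≤ a, …, iₙ ≤ a, and every b ∈ K with b ≤ t(i₁,…,iₙ) (interpreting the term in K), there exist an L_A-term s(x₁,…,x_m) and elements j₁,…,j_m ∈ K with j₁ ≤ a, …, j_m ≤ a such that b = s(j₁,…,j_m) in K. Equivalently, the closure of the initial segment {x ∈ K : x ≤ a} under the operations 0, S, +, · of K is downward closed with respect to ≤. -/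
/-- Terms of the language `L_A = {0, S, +, ·, ≤}` in the variables `x₁, …, xₙ`. -/
inductive ATerm (n : ℕ) : Type
  | var : Fin n → ATerm n
  | zero : ATerm n
  | succ : ATerm n → ATerm n
  | add : ATerm n → ATerm n → ATerm n
  | mul : ATerm n → ATerm n → ATerm n

/-- Interpretation of an `L_A`-term in a `T₁`-structure `K` under an assignment of
elements of `K` to the variables. -/
def ATerm.eval {K : Type} (T : T1Structure K) {n : ℕ} :
    ATerm n → (Fin n → K) → K
  | .var i, v => v i
  | .zero, _ => T.zero
  | .succ t, v => T.succ (t.eval T v)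
  | .add t s, v => T.add (t.eval T v) (s.eval T v)
  | .mul t s, v => T.mul (t.eval T v) (s.eval T v)

namespace ATerm

/-- Renaming of variables in a term. -/
def rename {n m : ℕ} (f : Fin n → Fin m) : ATerm n → ATerm m
  | var i => var (f i)
  | zero => zero
  | succ t => succ (t.rename f)
  | add t s => add (t.rename f) (s.rename f)
  | mul t s => mul (t.rename f) (s.rename f)

theorem eval_rename {K : Type} (T : T1Structure K) {n m : ℕ} (f : Fin n → Fin m)
    (t : ATerm n) (v : Fin m → K) :
    (t.rename f).eval T v = t.eval T (v ∘ f) := by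
  induction t <;> simp [rename, eval, *]

end ATerm

namespace T1Structure

variable {K : Type} (T : T1Structure K)

theorem le_refl (x : K) : T.le x x := by
  rcases T.le_total x x with h | h <;> exact h

theorem succ_nle (x : K) : ¬ T.le (T.succ x) x := by
  intro h
  exact ((T.not_le_iff x x).2 h) (T.le_refl x)

theorem le_antisymm {x y : K} (h1 : T.le x y) (h2 : T.le y x) : x = y := by
  by_contra hne
  rcases (T.ne_iff x y).1 hne with h | h
  · exact ((T.not_le_iff y x).2 h) h2
  · exact ((T.not_le_iff x y).2 h) h1

theorem le_self_succ (x : K) : T.le x (T.succ x) :=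
  (T.le_succ_iff x x).2 (Or.inr (T.le_refl x))

theorem add_le_add_right {x y : K} (h : T.le x y) (c : K) :
    T.le (T.add x c) (T.add y c) := by
  rcases T.le_total (T.add x c) (T.add y c) with h' | h'
  · exact h'
  · have := T.le_of_add_le_add y x c h'
    have : x = y := T.le_antisymm h this
    subst this; exact T.le_refl _

theorem mul_le_mul_right {x y c : K} (hc : c ≠ T.zero) (h : T.le x y) :
    T.le (T.mul x c) (T.mul y c) := by
  rcases T.le_total (T.mul x c) (T.mul y c) with h' | h'
  · exact h'
  · have := T.le_of_mul_le_mul y x c hc h'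
    have : x = y := T.le_antisymm h this
    subst this; exact T.le_refl _

/-- Downward-closure predicate: `b` is a value of some term on arguments `≤ a`. -/
def DC (T : T1Structure K) (a b : K) : Prop :=
  ∃ (m : ℕ) (s : ATerm m) (jv : Fin m → K),
    (∀ k, T.le (jv k) a) ∧ b = s.eval T jv

theorem DC.of_le {a b : K} (h : T.le b a) : T.DC a b :=
  ⟨1, .var 0, fun _ => b, fun _ => h, rfl⟩

theorem DC.zero (a : K) : T.DC a T.zero :=
  ⟨0, .zero, Fin.elim0, fun k => k.elim0, rfl⟩

theorem DC.succ {a x : K} (h : T.DC a x) : T.DC a (T.succ x) := by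
  obtain ⟨m, s, jv, hjv, he⟩ := h
  exact ⟨m, .succ s, jv, hjv, by rw [he]; rfl⟩

theorem DC.pair {a x y : K} (hx : T.DC a x) (hy : T.DC a y) :
    ∃ (m : ℕ) (s1 s2 : ATerm m) (jv : Fin m → K),
      (∀ k, T.le (jv k) a) ∧ x = s1.eval T jv ∧ y = s2.eval T jv := by
  obtain ⟨m1, s1, jv1, hjv1, he1⟩ := hx
  obtain ⟨m2, s2, jv2, hjv2, he2⟩ := hy
  refine ⟨m1 + m2, s1.rename (Fin.castAdd m2), s2.rename (Fin.natAdd m1),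
    Fin.append jv1 jv2, ?_, ?_, ?_⟩
  · intro k
    induction k using Fin.addCases with
    | left i => rw [Fin.append_left]; exact hjv1 i
    | right i => rw [Fin.append_right]; exact hjv2 i
  · rw [ATerm.eval_rename, he1]
    congr 1; ext i; exact (Fin.append_left jv1 jv2 i).symm
  · rw [ATerm.eval_rename, he2]
    congr 1; ext i; exact (Fin.append_right jv1 jv2 i).symm

theorem DC.add {a x y : K} (hx : T.DC a x) (hy : T.DC a y) : T.DC a (T.add x y) := by
  obtain ⟨m, s1, s2, jv, hjv, he1, he2⟩ := T1Structure.DC.pair T hx hy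
  exact ⟨m, .add s1 s2, jv, hjv, by rw [he1, he2]; rfl⟩

theorem DC.mul {a x y : K} (hx : T.DC a x) (hy : T.DC a y) : T.DC a (T.mul x y) := by
  obtain ⟨m, s1, s2, jv, hjv, he1, he2⟩ := T1Structure.DC.pair T hx hy
  exact ⟨m, .mul s1 s2, jv, hjv, by rw [he1, he2]; rfl⟩

end T1Structure

/-- Let `K` be a `T₁`-structure and `a ∈ K`.  For every `L_A`-term
`t(x₁,…,xₙ)`, all `i₁,…,iₙ ∈ K` with `i₁ ≤ a, …, iₙ ≤ a`, and every `b ∈ K` with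
`b ≤ t(i₁,…,iₙ)` in `K`, there exist an `L_A`-term `s(x₁,…,x_m)` and elements
`j₁,…,j_m ∈ K` with `j₁ ≤ a, …, j_m ≤ a` such that `b = s(j₁,…,j_m)` in `K`. -/
theorem T1Structure.term_closure_downward_closed
    (K : Type) (T : T1Structure K) (a : K) (n : ℕ) (t : ATerm n)
    (iv : Fin n → K) (hiv : ∀ k, T.le (iv k) a) (b : K)
    (hb : T.le b (t.eval T iv)) :
    ∃ (m : ℕ) (s : ATerm m) (jv : Fin m → K),
      (∀ k, T.le (jv k) a) ∧ b = s.eval T jv := by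
  suffices h : T.DC a b from h
  induction t generalizing b with
  | var i =>
    exact T1Structure.DC.of_le T (T.le_trans _ _ _ hb (hiv i))
  | zero =>
    have : b = T.zero := (T.le_zero_iff b).1 hb
    rw [this]; exact T1Structure.DC.zero T a
  | succ t iht =>
    rcases (T.le_succ_iff b (t.eval T iv)).1 hb with h | h
    · rw [h]; exact T1Structure.DC.succ T (iht _ (T.le_refl _))
    · exact iht _ h
  | add t s iht ihs =>
    set te := t.eval T iv with hte
    set se := s.eval T iv with hse
    by_cases hbs : T.le b se
    · exact ihs _ hbs
    · have hsb : T.le se b :=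
        T.le_trans _ _ _ (T.le_self_succ se) ((T.not_le_iff b se).1 hbs)
      obtain ⟨z, hz⟩ := T.exists_add_of_le se b hsb
      have hzt : T.le z te := by
        by_contra hzt
        have h1 : T.le (T.succ te) z := (T.not_le_iff z te).1 hzt
        have h2 : T.le (T.add (T.succ te) se) (T.add z se) :=
          T.add_le_add_right h1 se
        have h3 : T.le (T.add (T.succ te) se) (T.add te se) :=
          T.le_trans _ _ _ h2 (hz ▸ hb)
        exact T.succ_nle te (T.le_of_add_le_add _ _ _ h3)
      have : b = T.add z se := hz.symm
      rw [this]
      exact T1Structure.DC.add T (iht _ hzt) (ihs _ (T.le_refl _))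
  | mul t s iht ihs =>
    set te := t.eval T iv with hte
    set se := s.eval T iv with hse
    by_cases hs0 : se = T.zero
    · have : T.mul te se = T.zero := by rw [hs0]; exact T.mul_zero te
      have hb0 : b = T.zero := (T.le_zero_iff b).1 (this ▸ hb)
      rw [hb0]; exact T1Structure.DC.zero T a
    · obtain ⟨q, r, hqr, hr⟩ := T.exists_div_mod b se hs0
      have hq : T.le q te := by
        by_contra hq
        have h1 : T.le (T.succ te) q := (T.not_le_iff q te).1 hq
        have h2 : T.le (T.mul (T.succ te) se) (T.mul q se) :=
          T.mul_le_mul_right hs0 h1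
        have h3 : T.le (T.mul q se) b := hqr ▸ T.le_add_left (T.mul q se) r
        have h4 : T.le (T.mul (T.succ te) se) (T.mul te se) :=
          T.le_trans _ _ _ h2 (T.le_trans _ _ _ h3 hb)
        exact T.succ_nle te (T.le_of_mul_le_mul _ _ _ hs0 h4)
      have hrle : T.le r se := hr
      rw [hqr]
      exact T1Structure.DC.add T (ihs _ hrle)
        (T1Structure.DC.mul T (iht _ hq) (ihs _ (T.le_refl _)))
end
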